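/- Let α > −1 be real, let θ be a positive even integer, let r, c₀ be real numbers, and let n ≠ m be integers with n, m ≥ 1. Suppose yₙ, yₘ : ℝ → ℝ are polynomial functions such that for i ∈ {n, m} and all real x: x(x−r)yᵢ''(x) + (−x² + (α+r+θ+1)x − r(α+1))yᵢ'(x) + (i(x−r) − c₀)yᵢ(x) = 0. Then ∫₀^∞ (x−r)^θ x^α e^{−x} yₙ(x) yₘ(x) dx = 0. -/

import Mathlib

open MeasureTheory Filter Set Polynomial

lemma aux_integrable (α : ℝ) (hα : -1 < α) (R : Polynomial ℝ) :
    IntegrableOn (fun x => x ^ α * Real.exp (-x) * R.eval x) (Set.Ioi (0:ℝ)) := by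
  induction R using Polynomial.induction_on' with
  | add p q hp hq => exact (hp.add hq).congr_fun (fun x _ => by simp [mul_add]) measurableSet_Ioi
  | monomial k a =>
    have hk : (0:ℝ) < α + k + 1 := by
      have : (0:ℝ) ≤ k := Nat.cast_nonneg k
      linarith
    have base := (Real.GammaIntegral_convergent hk).const_mul a
    refine MeasureTheory.IntegrableOn.congr_fun base (fun x hx => ?_) measurableSet_Ioi
    have hx0 : (0:ℝ) < x := hx
    simp only [Polynomial.eval_monomial]
    rw [add_sub_cancel_right, Real.rpow_add hx0, Real.rpow_natCast]
    ring

lemma aux_tendsto (s : ℝ) (R : Polynomial ℝ) :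
    Tendsto (fun x => x ^ s * Real.exp (-x) * R.eval x) atTop (nhds 0) := by
  induction R using Polynomial.induction_on' with
  | add p q hp hq => simpa [mul_add] using hp.add hq
  | monomial k a =>
    have base := (tendsto_rpow_mul_exp_neg_mul_atTop_nhds_zero (s + k) 1 one_pos).const_mul a
    rw [mul_zero] at base
    refine base.congr' ?_
    filter_upwards [eventually_gt_atTop (0:ℝ)] with x hx
    simp only [Polynomial.eval_monomial]
    rw [Real.rpow_add hx, Real.rpow_natCast, neg_one_mul]
    ring

/-- Orthogonality of exceptional X₁-Laguerre polynomials on [0,∞) with respect to the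
weight `(x-r)^θ x^α e^{-x}`. -/
theorem x1_laguerre_orthogonality
    (α : ℝ) (hα : -1 < α)
    (θ : ℕ) (hθpos : 0 < θ) (hθeven : Even θ)
    (r c0 : ℝ) (n m : ℤ) (hn : 1 ≤ n) (hm : 1 ≤ m) (hnm : n ≠ m)
    (yn ym : ℝ → ℝ)
    (hynpoly : ∃ P : Polynomial ℝ, ∀ x, yn x = P.eval x)
    (hympoly : ∃ P : Polynomial ℝ, ∀ x, ym x = P.eval x)
    (heqn : ∀ x : ℝ,
      x * (x - r) * deriv (deriv yn) x
        + (-x ^ 2 + (α + r + θ + 1) * x - r * (α + 1)) * deriv yn x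
        + ((n : ℝ) * (x - r) - c0) * yn x = 0)
    (heqm : ∀ x : ℝ,
      x * (x - r) * deriv (deriv ym) x
        + (-x ^ 2 + (α + r + θ + 1) * x - r * (α + 1)) * deriv ym x
        + ((m : ℝ) * (x - r) - c0) * ym x = 0) :
    ∫ x in Set.Ioi (0 : ℝ),
      (x - r) ^ θ * x ^ α * Real.exp (-x) * yn x * ym x = 0 := by
  obtain ⟨P, hP⟩ := hynpoly
  obtain ⟨Q, hQ⟩ := hympoly
  have hyn : yn = fun x => P.eval x := funext hP
  have hym : ym = fun x => Q.eval x := funext hQ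
  subst hyn hym
  obtain ⟨t, rfl⟩ : ∃ t, θ = t + 1 := ⟨θ - 1, (Nat.succ_pred_eq_of_pos hθpos).symm⟩
  -- rewrite hypotheses in polynomial form
  have hdP : deriv (fun x => P.eval x) = fun x => P.derivative.eval x :=
    funext fun x => (P.hasDerivAt x).deriv
  have hdQ : deriv (fun x => Q.eval x) = fun x => Q.derivative.eval x :=
    funext fun x => (Q.hasDerivAt x).deriv
  rw [hdP] at heqn
  rw [hdQ] at heqm
  have hdP2 : deriv (fun x => P.derivative.eval x) = fun x => P.derivative.derivative.eval x :=
    funext fun x => (P.derivative.hasDerivAt x).deriv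
  have hdQ2 : deriv (fun x => Q.derivative.eval x) = fun x => Q.derivative.derivative.eval x :=
    funext fun x => (Q.derivative.hasDerivAt x).deriv
  rw [hdP2] at heqn
  rw [hdQ2] at heqm
  push_cast at heqn heqm
  set G : Polynomial ℝ := P.derivative * Q - P * Q.derivative with hG
  set H : Polynomial ℝ := (X - C r) ^ (t + 1) * G with hH
  set F : ℝ → ℝ := fun x => x ^ (α + 1) * Real.exp (-x) * H.eval x with hF
  set c : ℝ := (m : ℝ) - (n : ℝ) with hc
  set g : ℝ → ℝ :=
    fun x => (x - r) ^ (t + 1) * x ^ α * Real.exp (-x) * P.eval x * Q.eval x with hg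
  have hderiv : ∀ x ∈ Set.Ioi (0:ℝ), HasDerivAt F (c * g x) x := by
    intro x hx
    have hx0 : (0:ℝ) < x := hx
    have h1 : HasDerivAt (fun y : ℝ => y ^ (α + 1)) ((α + 1) * x ^ α) x := by
      have := Real.hasDerivAt_rpow_const (x := x) (p := α + 1) (Or.inl (ne_of_gt hx0))
      simpa using this
    have h2 : HasDerivAt (fun y : ℝ => Real.exp (-y)) (-Real.exp (-x)) x := by
      simpa using (hasDerivAt_neg x).exp
    have h3 : HasDerivAt (fun y : ℝ => H.eval y) (H.derivative.eval x) x :=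
      H.hasDerivAt x
    have total := (h1.mul h2).mul h3
    refine total.congr_deriv ?_
    symm
    simp only [Pi.mul_apply]
    -- algebraic identity
    have hHe : H.eval x = (x - r) ^ (t + 1) * G.eval x := by
      simp [hH]
    have hHd : H.derivative.eval x
        = ((t:ℝ) + 1) * (x - r) ^ t * G.eval x + (x - r) ^ (t + 1) * G.derivative.eval x := by
      simp [hH, Polynomial.derivative_pow, Polynomial.derivative_mul] <;> ring
    have hGe : G.eval x = P.derivative.eval x * Q.eval x - P.eval x * Q.derivative.eval x := by
      simp [hG]
    have hGd : G.derivative.eval x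
        = P.derivative.derivative.eval x * Q.eval x - P.eval x * Q.derivative.derivative.eval x := by
      simp [hG, Polynomial.derivative_mul] <;> ring
    have hxp : x ^ (α + 1) = x ^ α * x := Real.rpow_add_one (ne_of_gt hx0) α
    rw [hg, hc, hxp, hHe, hHd, hGe, hGd]
    linear_combination (-(x ^ α * Real.exp (-x)) * (x - r) ^ t) *
      (Q.eval x * heqn x - P.eval x * heqm x)
  have hint : IntegrableOn (fun x => c * g x) (Set.Ioi (0:ℝ)) := by
    have := aux_integrable α hα (C c * (X - C r) ^ (t + 1) * P * Q)
    refine this.congr_fun (fun x hx => ?_) measurableSet_Ioi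
    simp [hg]
    ring
  have hcont : ContinuousWithinAt F (Set.Ici (0:ℝ)) 0 := by
    have c1 : ContinuousAt (fun x : ℝ => x ^ (α + 1)) 0 :=
      Real.continuousAt_rpow_const 0 (α + 1) (Or.inr (by linarith))
    exact ((c1.mul ((Real.continuous_exp.comp continuous_neg).continuousAt)).mul
      (H.continuous_aeval).continuousAt).continuousWithinAt
  have htend : Tendsto F atTop (nhds 0) := aux_tendsto (α + 1) H
  have key := integral_Ioi_of_hasDerivAt_of_tendsto hcont hderiv hint htend
  have hF0 : F 0 = 0 := by
    simp [hF, Real.zero_rpow (by linarith : α + 1 ≠ 0)]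
  rw [hF0, sub_zero, MeasureTheory.integral_const_mul] at key
  have hc0 : c ≠ 0 := by
    rw [hc, sub_ne_zero]
    exact_mod_cast hnm.symm
  have hzero : ∫ x in Set.Ioi (0:ℝ), g x = 0 := by
    rcases mul_eq_zero.mp key with h | h
    · exact absurd h hc0
    · exact h
  simpa [hg] using hzero
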